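/- For every real α > 0, every real λ > −1/2, and every integer m ≥ 1, lim_{n→∞} Σ_{k=0}^n [ α Γ(n−k+α) Γ(n+1) / ( Γ(n−k+1) Γ(n+α+1) ) ] · ( k(2n − k + 2λ − 1) / (4(n+λ−1)(n+λ)) )^m = Γ(α/2 + 1) Γ(m+1) / (4^m Γ(α/2 + m + 1)). -/

import Mathlib

open Filter MeasureTheory

open Finset in

lemma tele (α : ℝ) (hα : 0 < α) (N : ℕ) :
    ∑ i ∈ Finset.range (N+1), Real.Gamma ((i:ℝ)+α) / (i.factorial : ℝ)
      = Real.Gamma ((N:ℝ)+α+1) / (α * (N.factorial : ℝ)) := by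
  induction N with
  | zero =>
    simp only [Finset.sum_range_one, Nat.cast_zero, zero_add, Nat.factorial_zero,
      Nat.cast_one, mul_one, div_one]
    rw [Real.Gamma_add_one (by positivity)]
    field_simp
  | succ N ih =>
    rw [Finset.sum_range_succ, ih]
    have h1 : Real.Gamma ((N:ℝ)+1+α+1) = ((N:ℝ)+α+1) * Real.Gamma ((N:ℝ)+α+1) := by
      rw [show (N:ℝ)+1+α+1 = ((N:ℝ)+α+1)+1 by ring, Real.Gamma_add_one (by positivity)]
    have hc : ((N+1:ℕ):ℝ) = (N:ℝ)+1 := by push_cast; ring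
    rw [hc, h1]
    have hfact : ((N+1).factorial : ℝ) = ((N:ℝ)+1) * (N.factorial : ℝ) := by
      rw [Nat.factorial_succ]; push_cast; ring
    have hG : Real.Gamma ((N:ℝ)+1+α) = ((N:ℝ)+α) * Real.Gamma ((N:ℝ)+α) := by
      rw [show (N:ℝ)+1+α = ((N:ℝ)+α)+1 by ring, Real.Gamma_add_one (by positivity)]
    have hG2 : Real.Gamma ((N:ℝ)+α+1) = ((N:ℝ)+α) * Real.Gamma ((N:ℝ)+α) := by
      rw [Real.Gamma_add_one (by positivity)]
    rw [hfact, hG, hG2]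
    have hf : (N.factorial : ℝ) ≠ 0 := by positivity
    field_simp
    ring

open Finset in

lemma descFac_mul_factorial (p : ℕ) : ∀ i : ℕ, ((i+p).descFactorial p) * i.factorial = (i+p).factorial := by
  induction p with
  | zero => intro i; simp
  | succ p ih =>
    intro i
    have h1 : (i + (p+1)).descFactorial (p+1) = (i+1) * ((i+1) + p).descFactorial p := by
      rw [Nat.descFactorial_succ]
      have : i + (p + 1) - p = i + 1 := by omega
      rw [this, show i + (p+1) = (i+1)+p by omega]
    rw [h1]
    have := ih (i+1)
    calc (i+1) * (((i+1)+p).descFactorial p) * i.factorial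
        = ((i+1)+p).descFactorial p * ((i+1) * i.factorial) := by ring
      _ = ((i+1)+p).descFactorial p * (i+1).factorial := by rw [Nat.factorial_succ]
      _ = ((i+1)+p).factorial := this
      _ = (i+(p+1)).factorial := by congr 1; omega

open Finset in
lemma momentD (α : ℝ) (hα : 0 < α) (p n : ℕ) :
    ∑ j ∈ Finset.range (n+1), Real.Gamma ((j:ℝ)+α)/Real.Gamma ((j:ℝ)+1) * (j.descFactorial p : ℝ)
      = Real.Gamma ((n:ℝ)+α+1) * (n.descFactorial p : ℝ) / ((α+(p:ℝ)) * (n.factorial : ℝ)) := by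
  rcases lt_or_ge n p with hnp | hpn
  · rw [Nat.descFactorial_eq_zero_iff_lt.mpr hnp]
    rw [Finset.sum_eq_zero]
    · simp
    · intro j hj
      rw [Finset.mem_range] at hj
      rw [Nat.descFactorial_eq_zero_iff_lt.mpr (by omega)]
      simp
  · -- p ≤ n
    have hsplit : ∑ j ∈ Finset.range (n+1), Real.Gamma ((j:ℝ)+α)/Real.Gamma ((j:ℝ)+1) * (j.descFactorial p : ℝ)
        = ∑ j ∈ Finset.Ico p (n+1), Real.Gamma ((j:ℝ)+α)/Real.Gamma ((j:ℝ)+1) * (j.descFactorial p : ℝ) := by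
      rw [Finset.range_eq_Ico, ← Finset.sum_Ico_consecutive _ (Nat.zero_le p) (by omega)]
      rw [← Finset.range_eq_Ico]
      rw [Finset.sum_eq_zero (fun j hj => by
        rw [Finset.mem_range] at hj
        rw [Nat.descFactorial_eq_zero_iff_lt.mpr hj]; simp), zero_add]
    rw [hsplit, Finset.sum_Ico_eq_sum_range]
    have hterm : ∀ i : ℕ, Real.Gamma (((p+i:ℕ):ℝ)+α)/Real.Gamma (((p+i:ℕ):ℝ)+1) * ((p+i).descFactorial p : ℝ)
        = Real.Gamma ((i:ℝ)+(α+(p:ℝ))) / (i.factorial : ℝ) := by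
      intro i
      have h1 : Real.Gamma (((p+i:ℕ):ℝ)+1) = ((p+i).factorial : ℝ) := Real.Gamma_nat_eq_factorial (p+i)
      have h2 : ((i+p).descFactorial p : ℝ) * (i.factorial : ℝ) = ((i+p).factorial : ℝ) := by
        exact_mod_cast congrArg (Nat.cast (R := ℝ)) (descFac_mul_factorial p i)
      have h3 : Real.Gamma (((p+i:ℕ):ℝ)+α) = Real.Gamma ((i:ℝ)+(α+(p:ℝ))) := by
        congr 1; push_cast; ring
      rw [h1, h3, show p+i = i+p by omega]
      have hf1 : ((i+p).factorial : ℝ) ≠ 0 := by positivity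
      have hf2 : ((i).factorial : ℝ) ≠ 0 := by positivity
      field_simp
      linear_combination h2
    calc ∑ i ∈ Finset.range (n+1-p), Real.Gamma (((p+i:ℕ):ℝ)+α)/Real.Gamma (((p+i:ℕ):ℝ)+1) * ((p+i).descFactorial p : ℝ)
        = ∑ i ∈ Finset.range ((n-p)+1), Real.Gamma ((i:ℝ)+(α+(p:ℝ))) / (i.factorial : ℝ) := by
          rw [show n+1-p = (n-p)+1 by omega]
          exact Finset.sum_congr rfl (fun i _ => hterm i)
      _ = Real.Gamma (((n-p:ℕ):ℝ)+(α+(p:ℝ))+1) / ((α+(p:ℝ)) * ((n-p).factorial : ℝ)) := tele _ (by positivity) _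
      _ = Real.Gamma ((n:ℝ)+α+1) * (n.descFactorial p : ℝ) / ((α+(p:ℝ)) * (n.factorial : ℝ)) := by
          have hc : ((n-p:ℕ):ℝ) = (n:ℝ) - (p:ℝ) := by
            rw [Nat.cast_sub hpn]
          have harg : ((n-p:ℕ):ℝ)+(α+(p:ℝ))+1 = (n:ℝ)+α+1 := by rw [hc]; ring
          rw [harg]
          have h4 : (n.descFactorial p : ℝ) * ((n-p).factorial : ℝ) = (n.factorial : ℝ) := by
            have := descFac_mul_factorial p (n-p)
            rw [show (n-p)+p = n by omega] at this
            exact_mod_cast congrArg (Nat.cast (R := ℝ)) this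
          have hf1 : ((n-p).factorial : ℝ) ≠ 0 := by positivity
          have hf2 : ((n).factorial : ℝ) ≠ 0 := by positivity
          have hap : (α+(p:ℝ)) ≠ 0 := by positivity
          field_simp
          linear_combination (-1:ℝ) * h4

open Finset in

lemma step_descFac (q : ℕ) (j : ℕ) :
    (j:ℝ) * (j.descFactorial q : ℝ) = (j.descFactorial (q+1) : ℝ) + (q:ℝ) * (j.descFactorial q : ℝ) := by
  rcases le_or_gt q j with h | h
  · rw [Nat.descFactorial_succ]
    rw [Nat.cast_mul, Nat.cast_sub h]
    ring
  · rw [Nat.descFactorial_eq_zero_iff_lt.mpr h,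
      Nat.descFactorial_eq_zero_iff_lt.mpr (by omega)]
    simp

lemma rep (p : ℕ) : ∃ s : ℕ → ℝ, s p = 1 ∧ ∀ j : ℕ,
    (j:ℝ)^p = ∑ q ∈ Finset.range (p+1), s q * (j.descFactorial q : ℝ) := by
  induction p with
  | zero => exact ⟨fun _ => 1, rfl, fun j => by simp⟩
  | succ p ih =>
    obtain ⟨s, hsp, hs⟩ := ih
    refine ⟨fun r => (if r ≤ p then (r:ℝ) * s r else 0) + (if r = 0 then 0 else s (r-1)), ?_, ?_⟩
    · simp [hsp]
    · intro j
      have : (j:ℝ)^(p+1) = ∑ q ∈ Finset.range (p+1), s q * ((j:ℝ) * (j.descFactorial q : ℝ)) := by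
        rw [pow_succ, hs j, Finset.sum_mul]
        exact Finset.sum_congr rfl (fun q _ => by ring)
      rw [this]
      have expand : ∑ q ∈ Finset.range (p+1), s q * ((j:ℝ) * (j.descFactorial q : ℝ))
          = (∑ q ∈ Finset.range (p+1), (q:ℝ) * s q * (j.descFactorial q : ℝ))
            + ∑ q ∈ Finset.range (p+1), s q * (j.descFactorial (q+1) : ℝ) := by
        rw [← Finset.sum_add_distrib]
        exact Finset.sum_congr rfl (fun q _ => by rw [step_descFac]; ring)
      rw [expand]
      have left : ∑ r ∈ Finset.range (p+2), (if r ≤ p then (r:ℝ) * s r else 0) * (j.descFactorial r : ℝ)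
          = ∑ q ∈ Finset.range (p+1), (q:ℝ) * s q * (j.descFactorial q : ℝ) := by
        rw [Finset.sum_range_succ, if_neg (by omega), zero_mul, add_zero]
        exact Finset.sum_congr rfl (fun q hq => by
          rw [Finset.mem_range] at hq
          rw [if_pos (by omega)])
      have right : ∑ r ∈ Finset.range (p+2), (if r = 0 then (0:ℝ) else s (r-1)) * (j.descFactorial r : ℝ)
          = ∑ q ∈ Finset.range (p+1), s q * (j.descFactorial (q+1) : ℝ) := by
        rw [Finset.sum_range_succ' (fun r => (if r = 0 then (0:ℝ) else s (r-1)) * (j.descFactorial r : ℝ)) (p+1)]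
        simp only [if_neg (Nat.succ_ne_zero _), if_pos rfl, zero_mul, add_zero, Nat.add_sub_cancel]
        simp
      rw [← left, ← right, ← Finset.sum_add_distrib]
      exact Finset.sum_congr rfl (fun r _ => by ring)

lemma tendsto_nat_div_add (c : ℝ) : Tendsto (fun n : ℕ => ((n:ℝ) + c)/(n:ℝ)) atTop (nhds 1) := by
  have h1 : Tendsto (fun n : ℕ => 1 + c * (1/(n:ℝ))) atTop (nhds (1 + c * 0)) :=
    tendsto_const_nhds.add (tendsto_const_nhds.mul tendsto_one_div_atTop_nhds_zero_nat)
  rw [mul_zero, add_zero] at h1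
  apply h1.congr'
  filter_upwards [eventually_ge_atTop 1] with n hn
  have : (n:ℝ) ≠ 0 := by positivity
  field_simp

lemma tendsto_descFac (q : ℕ) :
    Tendsto (fun n : ℕ => (n.descFactorial q : ℝ)/(n:ℝ)^q) atTop (nhds 1) := by
  induction q with
  | zero => simpa using tendsto_const_nhds
  | succ q ih =>
    have h2 : Tendsto (fun n : ℕ => (((n:ℝ) - q)/(n:ℝ)) * ((n.descFactorial q : ℝ)/(n:ℝ)^q)) atTop (nhds (1 * 1)) := by
      apply Tendsto.mul _ ih
      have := tendsto_nat_div_add (-(q:ℝ))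
      simpa [← sub_eq_add_neg] using this
    rw [one_mul] at h2
    apply h2.congr'
    filter_upwards [eventually_ge_atTop (q+1)] with n hn
    rw [Nat.descFactorial_succ, Nat.cast_mul, Nat.cast_sub (by omega)]
    rw [pow_succ, div_mul_div_comm, mul_comm ((n:ℝ)^q) (n:ℝ)]

open Finset in
lemma tendsto_shift {f : ℕ → ℝ} {L : ℝ} {p k : ℕ}
    (h : Tendsto (fun n : ℕ => f n/(n:ℝ)^p) atTop (nhds L)) (hpk : p < k) :
    Tendsto (fun n : ℕ => f n/(n:ℝ)^k) atTop (nhds 0) := by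
  have h2 : Tendsto (fun n : ℕ => (f n/(n:ℝ)^p) * (1/(n:ℝ))^(k-p)) atTop (nhds (L * 0)) := by
    apply h.mul
    have := (tendsto_one_div_atTop_nhds_zero_nat (𝕜 := ℝ)).pow (k-p)
    rwa [zero_pow (by omega)] at this
  rw [mul_zero] at h2
  apply h2.congr'
  filter_upwards [eventually_ge_atTop 1] with n hn
  have hn0 : (n:ℝ) ≠ 0 := Nat.cast_ne_zero.mpr (by omega)
  rw [one_div, inv_pow, ← div_eq_mul_inv, div_div, ← pow_add,
    show p + (k-p) = k by omega]

lemma momentM (α : ℝ) (hα : 0 < α) (p : ℕ) : ∃ s : ℕ → ℝ, s p = 1 ∧ ∀ n : ℕ,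
    (α * Real.Gamma ((n:ℝ)+1)/Real.Gamma ((n:ℝ)+α+1)) *
      ∑ j ∈ Finset.range (n+1), Real.Gamma ((j:ℝ)+α)/Real.Gamma ((j:ℝ)+1) * (j:ℝ)^p
      = ∑ q ∈ Finset.range (p+1), s q * (α/(α+(q:ℝ))) * (n.descFactorial q : ℝ) := by
  obtain ⟨s, hsp, hs⟩ := rep p
  refine ⟨s, hsp, fun n => ?_⟩
  have swap : ∑ j ∈ Finset.range (n+1), Real.Gamma ((j:ℝ)+α)/Real.Gamma ((j:ℝ)+1) * (j:ℝ)^p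
      = ∑ q ∈ Finset.range (p+1), s q *
          (Real.Gamma ((n:ℝ)+α+1) * (n.descFactorial q : ℝ) / ((α+(q:ℝ)) * (n.factorial : ℝ))) := by
    have : ∀ j ∈ Finset.range (n+1), Real.Gamma ((j:ℝ)+α)/Real.Gamma ((j:ℝ)+1) * (j:ℝ)^p
        = ∑ q ∈ Finset.range (p+1), s q * (Real.Gamma ((j:ℝ)+α)/Real.Gamma ((j:ℝ)+1) * (j.descFactorial q : ℝ)) := by
      intro j _
      rw [hs j, Finset.mul_sum]
      exact Finset.sum_congr rfl (fun q _ => by ring)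
    rw [Finset.sum_congr rfl this, Finset.sum_comm]
    exact Finset.sum_congr rfl (fun q _ => by rw [← Finset.mul_sum, momentD α hα q n])
  rw [swap, Finset.mul_sum]
  apply Finset.sum_congr rfl
  intro q _
  have hG : Real.Gamma ((n:ℝ)+1) = (n.factorial : ℝ) := by
    exact_mod_cast Real.Gamma_nat_eq_factorial n
  have h1 : Real.Gamma ((n:ℝ)+α+1) ≠ 0 := ne_of_gt (Real.Gamma_pos_of_pos (by positivity))
  have h2 : (n.factorial : ℝ) ≠ 0 := by positivity
  have h3 : (α+(q:ℝ)) ≠ 0 := by positivity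
  rw [hG]
  field_simp

lemma tendsto_M (α : ℝ) (hα : 0 < α) (p : ℕ) :
    Tendsto (fun n : ℕ => (α * Real.Gamma ((n:ℝ)+1)/Real.Gamma ((n:ℝ)+α+1)) *
      (∑ j ∈ Finset.range (n+1), Real.Gamma ((j:ℝ)+α)/Real.Gamma ((j:ℝ)+1) * (j:ℝ)^p) / (n:ℝ)^p)
      atTop (nhds (α/(α+(p:ℝ)))) := by
  obtain ⟨s, hsp, hs⟩ := momentM α hα p
  have key : Tendsto (fun n : ℕ => ∑ q ∈ Finset.range (p+1),
      (s q * (α/(α+(q:ℝ))) * (n.descFactorial q : ℝ)) / (n:ℝ)^p) atTop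
      (nhds (∑ q ∈ Finset.range (p+1), if q = p then α/(α+(p:ℝ)) else 0)) := by
    apply tendsto_finset_sum
    intro q hq
    rw [Finset.mem_range] at hq
    rcases eq_or_lt_of_le (Nat.lt_succ_iff.mp hq) with heq | hlt
    · rw [if_pos heq]
      subst heq
      rw [hsp]
      have := (tendsto_descFac q).const_mul (α/(α+(q:ℝ)))
      rw [mul_one] at this
      apply this.congr
      intro n
      rw [one_mul]
      ring
    · rw [if_neg (by omega)]
      have base : Tendsto (fun n : ℕ => (s q * (α/(α+(q:ℝ))) * (n.descFactorial q : ℝ))/(n:ℝ)^q)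
          atTop (nhds (s q * (α/(α+(q:ℝ))) * 1)) := by
        have := (tendsto_descFac q).const_mul (s q * (α/(α+(q:ℝ))))
        apply this.congr
        intro n; ring
      exact tendsto_shift base hlt
  have hsum : (∑ q ∈ Finset.range (p+1), if q = p then α/(α+(p:ℝ)) else 0) = α/(α+(p:ℝ)) := by
    rw [Finset.sum_ite_eq' (Finset.range (p+1)) p (fun _ => α/(α+(p:ℝ)))]
    rw [if_pos (Finset.self_mem_range_succ p)]
  rw [hsum] at key
  apply key.congr
  intro n
  rw [← Finset.sum_div, ← hs n]

open Finset in
lemma tendsto_B (α : ℝ) (hα : 0 < α) (μ : ℝ) (k : ℕ) :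
    Tendsto (fun n : ℕ => (α * Real.Gamma ((n:ℝ)+1)/Real.Gamma ((n:ℝ)+α+1)) *
      (∑ j ∈ Finset.range (n+1), Real.Gamma ((j:ℝ)+α)/Real.Gamma ((j:ℝ)+1) * ((j:ℝ)+μ)^k) / (n:ℝ)^k)
      atTop (nhds (α/(α+(k:ℝ)))) := by
  have expand : ∀ n : ℕ, (α * Real.Gamma ((n:ℝ)+1)/Real.Gamma ((n:ℝ)+α+1)) *
      (∑ j ∈ Finset.range (n+1), Real.Gamma ((j:ℝ)+α)/Real.Gamma ((j:ℝ)+1) * ((j:ℝ)+μ)^k)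
      = ∑ p ∈ Finset.range (k+1), (μ^(k-p) * (k.choose p : ℝ)) *
          ((α * Real.Gamma ((n:ℝ)+1)/Real.Gamma ((n:ℝ)+α+1)) *
            ∑ j ∈ Finset.range (n+1), Real.Gamma ((j:ℝ)+α)/Real.Gamma ((j:ℝ)+1) * (j:ℝ)^p) := by
    intro n
    have inner : ∀ j ∈ Finset.range (n+1),
        Real.Gamma ((j:ℝ)+α)/Real.Gamma ((j:ℝ)+1) * ((j:ℝ)+μ)^k
        = ∑ p ∈ Finset.range (k+1), (μ^(k-p) * (k.choose p : ℝ)) *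
            (Real.Gamma ((j:ℝ)+α)/Real.Gamma ((j:ℝ)+1) * (j:ℝ)^p) := by
      intro j _
      rw [add_pow, Finset.mul_sum]
      exact Finset.sum_congr rfl (fun p _ => by ring)
    rw [Finset.sum_congr rfl inner, Finset.sum_comm, Finset.mul_sum]
    refine Finset.sum_congr rfl (fun p _ => ?_)
    simp only [Finset.mul_sum]
    exact Finset.sum_congr rfl (fun j _ => by ring)
  have key : Tendsto (fun n : ℕ => ∑ p ∈ Finset.range (k+1),
      ((μ^(k-p) * (k.choose p : ℝ)) * ((α * Real.Gamma ((n:ℝ)+1)/Real.Gamma ((n:ℝ)+α+1)) *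
        ∑ j ∈ Finset.range (n+1), Real.Gamma ((j:ℝ)+α)/Real.Gamma ((j:ℝ)+1) * (j:ℝ)^p)) / (n:ℝ)^k)
      atTop (nhds (∑ p ∈ Finset.range (k+1), if p = k then α/(α+(k:ℝ)) else 0)) := by
    apply tendsto_finset_sum
    intro p hp
    rw [Finset.mem_range] at hp
    rcases eq_or_lt_of_le (Nat.lt_succ_iff.mp hp) with heq | hlt
    · rw [if_pos heq]
      subst heq
      simp only [Nat.sub_self, pow_zero, Nat.choose_self, Nat.cast_one, mul_one, one_mul]
      exact tendsto_M α hα p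
    · rw [if_neg (by omega)]
      have hb : Tendsto (fun n : ℕ => ((μ^(k-p) * (k.choose p : ℝ)) *
          ((α * Real.Gamma ((n:ℝ)+1)/Real.Gamma ((n:ℝ)+α+1)) *
            ∑ j ∈ Finset.range (n+1), Real.Gamma ((j:ℝ)+α)/Real.Gamma ((j:ℝ)+1) * (j:ℝ)^p)) / (n:ℝ)^p)
          atTop (nhds ((μ^(k-p) * (k.choose p : ℝ)) * (α/(α+(p:ℝ))))) :=
        ((tendsto_M α hα p).const_mul (μ^(k-p) * (k.choose p : ℝ))).congr (fun n => by ring)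
      exact tendsto_shift hb hlt
  have hsum : (∑ p ∈ Finset.range (k+1), if p = k then α/(α+(k:ℝ)) else 0) = α/(α+(k:ℝ)) := by
    rw [Finset.sum_ite_eq' (Finset.range (k+1)) k (fun _ => α/(α+(k:ℝ)))]
    rw [if_pos (Finset.self_mem_range_succ k)]
  rw [hsum] at key
  apply key.congr
  intro n
  rw [← Finset.sum_div, ← expand n]

open Finset in
lemma keyid : ∀ (m : ℕ) (x : ℝ), 0 < x →
    ∑ i ∈ Finset.range (m+1), (-1:ℝ)^i * (m.choose i : ℝ) / (x + (i:ℝ))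
      = Real.Gamma x * (m.factorial : ℝ) / Real.Gamma (x + (m:ℝ) + 1) := by
  intro m
  induction m with
  | zero =>
    intro x hx
    simp only [zero_add, Finset.sum_range_one, pow_zero, Nat.choose_self, Nat.cast_one, Nat.cast_zero,
      add_zero, one_mul, Nat.factorial_zero, mul_one]
    rw [Real.Gamma_add_one (ne_of_gt hx)]
    have hG : Real.Gamma x ≠ 0 := ne_of_gt (Real.Gamma_pos_of_pos hx)
    field_simp
  | succ m ih =>
    intro x hx
    have step : ∑ i ∈ Finset.range (m+2), (-1:ℝ)^i * ((m+1).choose i : ℝ) / (x + (i:ℝ))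
        = (∑ i ∈ Finset.range (m+1), (-1:ℝ)^i * (m.choose i : ℝ) / (x + (i:ℝ)))
          - ∑ i ∈ Finset.range (m+1), (-1:ℝ)^i * (m.choose i : ℝ) / ((x+1) + (i:ℝ)) := by
      rw [Finset.sum_range_succ' (fun i => (-1:ℝ)^i * ((m+1).choose i : ℝ) / (x + (i:ℝ))) (m+1)]
      have csplit : ∀ i : ℕ, ((m+1).choose (i+1) : ℝ) = (m.choose i : ℝ) + (m.choose (i+1) : ℝ) := by
        intro i
        rw [Nat.choose_succ_succ]
        push_cast; ring
      have hA : ∑ i ∈ Finset.range (m+1), (-1:ℝ)^(i+1) * ((m+1).choose (i+1) : ℝ) / (x + ((i+1:ℕ):ℝ))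
          = (∑ i ∈ Finset.range (m+1), (-1:ℝ)^(i+1) * (m.choose (i+1) : ℝ) / (x + ((i+1:ℕ):ℝ)))
            - ∑ i ∈ Finset.range (m+1), (-1:ℝ)^i * (m.choose i : ℝ) / ((x+1) + (i:ℝ)) := by
        rw [← Finset.sum_sub_distrib]
        apply Finset.sum_congr rfl
        intro i _
        rw [csplit i]
        have : (x + ((i+1:ℕ):ℝ)) = (x+1) + (i:ℝ) := by push_cast; ring
        rw [this]
        ring
      rw [hA]
      have hB : (∑ i ∈ Finset.range (m+1), (-1:ℝ)^(i+1) * (m.choose (i+1) : ℝ) / (x + ((i+1:ℕ):ℝ)))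
          + (-1:ℝ)^0 * ((m+1).choose 0 : ℝ) / (x + ((0:ℕ):ℝ))
          = ∑ i ∈ Finset.range (m+2), (-1:ℝ)^i * (m.choose i : ℝ) / (x + (i:ℝ)) := by
        rw [Finset.sum_range_succ' (fun i => (-1:ℝ)^i * (m.choose i : ℝ) / (x + (i:ℝ))) (m+1)]
        simp
      have hC : ∑ i ∈ Finset.range (m+2), (-1:ℝ)^i * (m.choose i : ℝ) / (x + (i:ℝ))
          = ∑ i ∈ Finset.range (m+1), (-1:ℝ)^i * (m.choose i : ℝ) / (x + (i:ℝ)) := by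
        rw [Finset.sum_range_succ, Nat.choose_succ_self]
        simp
      linarith [hB, hC]
    rw [show m+1+1 = m+2 by rfl] at *
    rw [step, ih x hx, ih (x+1) (by linarith)]
    have e1 : Real.Gamma (x+1) = x * Real.Gamma x := Real.Gamma_add_one (ne_of_gt hx)
    have e2 : Real.Gamma (x + ((m:ℝ)+1) + 1) = (x + (m:ℝ) + 1) * Real.Gamma (x + (m:ℝ) + 1) := by
      rw [show x + ((m:ℝ)+1) + 1 = (x + (m:ℝ) + 1) + 1 by ring,
        Real.Gamma_add_one (by positivity)]
    have e3 : (x + 1 + (m:ℝ) + 1) = x + ((m:ℝ)+1) + 1 := by ring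
    have hG1 : Real.Gamma (x + (m:ℝ) + 1) ≠ 0 := ne_of_gt (Real.Gamma_pos_of_pos (by positivity))
    have hfac : ((m+1).factorial : ℝ) = ((m:ℝ)+1) * (m.factorial : ℝ) := by
      rw [Nat.factorial_succ]; push_cast; ring
    have hcast : ((m+1:ℕ):ℝ) = (m:ℝ)+1 := by push_cast; ring
    rw [hcast, e2, e3, e2, e1, hfac]
    have hx0 : x ≠ 0 := ne_of_gt hx
    have hxm : x + (m:ℝ) + 1 ≠ 0 := by positivity
    field_simp
    ring

open Finset in
lemma tendsto_G (α : ℝ) (hα : 0 < α) (lam : ℝ) (hlam : -(1/2) < lam) (m i : ℕ) (him : i ≤ m) :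
    Tendsto (fun n : ℕ => (-1:ℝ)^(i+m) * (m.choose i : ℝ) *
      ((((n:ℝ)+lam-1/2)^2)^i *
        ((α * Real.Gamma ((n:ℝ)+1)/Real.Gamma ((n:ℝ)+α+1)) *
          ∑ j ∈ Finset.range (n+1), Real.Gamma ((j:ℝ)+α)/Real.Gamma ((j:ℝ)+1) * ((j:ℝ)+(lam-1/2))^(2*(m-i)))) /
      (4*((n:ℝ)+lam-1)*((n:ℝ)+lam))^m)
    atTop (nhds ((-1:ℝ)^(i+m) * (m.choose i : ℝ) * ((1:ℝ)/4)^m * (α/(α+((2*(m-i):ℕ):ℝ))))) := by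
  have T1 : Tendsto (fun n : ℕ => ((((n:ℝ)+lam-1/2)/(n:ℝ))^2)^i) atTop (nhds 1) := by
    have h0 : Tendsto (fun n : ℕ => (((n:ℝ)+lam-1/2)/(n:ℝ))) atTop (nhds 1) :=
      (tendsto_nat_div_add (lam-1/2)).congr (fun n => by ring_nf)
    have := (h0.pow 2).pow i
    simpa using this
  have T2 : Tendsto (fun n : ℕ => (((n:ℝ)^2)/(4*((n:ℝ)+lam-1)*((n:ℝ)+lam)))^m)
      atTop (nhds (((1:ℝ)/4)^m)) := by
    have hden : Tendsto (fun n : ℕ => (4*((n:ℝ)+lam-1)*((n:ℝ)+lam))/(n:ℝ)^2) atTop (nhds 4) := by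
      have h1 := tendsto_nat_div_add (lam-1)
      have h2 := tendsto_nat_div_add lam
      have h3 := (h1.mul h2).const_mul (4:ℝ)
      rw [mul_one, mul_one] at h3
      apply h3.congr
      intro n
      ring
    have hquot : Tendsto (fun n : ℕ => ((4*((n:ℝ)+lam-1)*((n:ℝ)+lam))/(n:ℝ)^2)⁻¹)
        atTop (nhds (4⁻¹)) := hden.inv₀ (by norm_num)
    have hq2 : Tendsto (fun n : ℕ => ((n:ℝ)^2)/(4*((n:ℝ)+lam-1)*((n:ℝ)+lam)))
        atTop (nhds ((1:ℝ)/4)) := by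
      rw [show (1:ℝ)/4 = 4⁻¹ by norm_num]
      exact hquot.congr (fun n => inv_div _ _)
    exact hq2.pow m
  have T3 := tendsto_B α hα (lam-1/2) (2*(m-i))
  have prod : Tendsto (fun n : ℕ => ((-1:ℝ)^(i+m) * (m.choose i : ℝ)) *
      (((((n:ℝ)+lam-1/2)/(n:ℝ))^2)^i * (((n:ℝ)^2)/(4*((n:ℝ)+lam-1)*((n:ℝ)+lam)))^m) *
      ((α * Real.Gamma ((n:ℝ)+1)/Real.Gamma ((n:ℝ)+α+1)) *
        (∑ j ∈ Finset.range (n+1), Real.Gamma ((j:ℝ)+α)/Real.Gamma ((j:ℝ)+1) * ((j:ℝ)+(lam-1/2))^(2*(m-i))) / (n:ℝ)^(2*(m-i))))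
      atTop (nhds (((-1:ℝ)^(i+m) * (m.choose i : ℝ)) * (1 * ((1:ℝ)/4)^m) * (α/(α+((2*(m-i):ℕ):ℝ))))) :=
    (((T1.mul T2).const_mul _).mul T3)
  rw [show ((-1:ℝ)^(i+m) * (m.choose i : ℝ)) * (1 * ((1:ℝ)/4)^m) * (α/(α+((2*(m-i):ℕ):ℝ)))
      = (-1:ℝ)^(i+m) * (m.choose i : ℝ) * ((1:ℝ)/4)^m * (α/(α+((2*(m-i):ℕ):ℝ))) by ring] at prod
  apply prod.congr'
  filter_upwards [eventually_ge_atTop 2] with n hn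
  have hn2 : (2:ℝ) ≤ (n:ℝ) := by exact_mod_cast hn
  have hn0 : (n:ℝ) ≠ 0 := by linarith
  have hd1 : (0:ℝ) < (n:ℝ)+lam-1 := by linarith
  have hd2 : (0:ℝ) < (n:ℝ)+lam := by linarith
  have hD0 : (4*((n:ℝ)+lam-1)*((n:ℝ)+lam)) ≠ 0 := by positivity
  have hX : ((n:ℝ))^(2*(m-i)) ≠ 0 := pow_ne_zero _ hn0
  have e1 : ((n:ℝ))^(2*(m-i)) = (((n:ℝ))^2)^(m-i) := pow_mul _ 2 (m-i)
  have e2 : (((n:ℝ))^2)^i * (((n:ℝ))^2)^(m-i) = (((n:ℝ))^2)^m := by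
    rw [← pow_add]; congr 1; omega
  rw [e1]
  rw [div_pow ((n:ℝ)+lam-1/2) (n:ℝ) 2, div_pow, div_pow]
  rw [← e2]
  have hn2' : ((n:ℝ)^2)^i ≠ 0 := pow_ne_zero _ (pow_ne_zero _ hn0)
  have hn2'' : ((n:ℝ)^2)^(m-i) ≠ 0 := pow_ne_zero _ (pow_ne_zero _ hn0)
  field_simp

open Finset in
lemma claim1 (α lam : ℝ) (m n : ℕ) :
    ∑ k ∈ Finset.range (n+1),
      (α * Real.Gamma ((n:ℝ)-(k:ℝ)+α) * Real.Gamma ((n:ℝ)+1) /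
        (Real.Gamma ((n:ℝ)-(k:ℝ)+1) * Real.Gamma ((n:ℝ)+α+1))) *
      (((k:ℝ) * (2*(n:ℝ) - (k:ℝ) + 2*lam - 1)) / (4*((n:ℝ)+lam-1)*((n:ℝ)+lam)))^m
    = ∑ i ∈ Finset.range (m+1), (-1:ℝ)^(i+m) * (m.choose i : ℝ) *
      ((((n:ℝ)+lam-1/2)^2)^i *
        ((α * Real.Gamma ((n:ℝ)+1)/Real.Gamma ((n:ℝ)+α+1)) *
          ∑ j ∈ Finset.range (n+1), Real.Gamma ((j:ℝ)+α)/Real.Gamma ((j:ℝ)+1) * ((j:ℝ)+(lam-1/2))^(2*(m-i)))) /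
      (4*((n:ℝ)+lam-1)*((n:ℝ)+lam))^m := by
  rw [← Finset.sum_range_reflect (fun k : ℕ =>
      (α * Real.Gamma ((n:ℝ)-(k:ℝ)+α) * Real.Gamma ((n:ℝ)+1) /
        (Real.Gamma ((n:ℝ)-(k:ℝ)+1) * Real.Gamma ((n:ℝ)+α+1))) *
      (((k:ℝ) * (2*(n:ℝ) - (k:ℝ) + 2*lam - 1)) / (4*((n:ℝ)+lam-1)*((n:ℝ)+lam)))^m) (n+1)]
  simp only [Nat.add_sub_cancel]
  have step1 : ∀ j ∈ Finset.range (n+1),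
      (α * Real.Gamma ((n:ℝ)-((n-j:ℕ):ℝ)+α) * Real.Gamma ((n:ℝ)+1) /
        (Real.Gamma ((n:ℝ)-((n-j:ℕ):ℝ)+1) * Real.Gamma ((n:ℝ)+α+1))) *
      ((((n-j:ℕ):ℝ) * (2*(n:ℝ) - ((n-j:ℕ):ℝ) + 2*lam - 1)) / (4*((n:ℝ)+lam-1)*((n:ℝ)+lam)))^m
      = ∑ i ∈ Finset.range (m+1),
          ((-1:ℝ)^(i+m) * (m.choose i : ℝ) * (((n:ℝ)+lam-1/2)^2)^i / (4*((n:ℝ)+lam-1)*((n:ℝ)+lam))^m) *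
          ((α * Real.Gamma ((n:ℝ)+1)/Real.Gamma ((n:ℝ)+α+1)) *
            (Real.Gamma ((j:ℝ)+α)/Real.Gamma ((j:ℝ)+1) * ((j:ℝ)+(lam-1/2))^(2*(m-i)))) := by
    intro j hj
    rw [Finset.mem_range] at hj
    have hjn : j ≤ n := by omega
    have hc : ((n-j:ℕ):ℝ) = (n:ℝ)-(j:ℝ) := Nat.cast_sub hjn
    rw [hc, show (n:ℝ)-((n:ℝ)-(j:ℝ))+α = (j:ℝ)+α by ring,
      show (n:ℝ)-((n:ℝ)-(j:ℝ))+1 = (j:ℝ)+1 by ring,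
      show ((n:ℝ)-(j:ℝ)) * (2*(n:ℝ) - ((n:ℝ)-(j:ℝ)) + 2*lam - 1)
        = ((n:ℝ)+lam-1/2)^2 - (((j:ℝ)+(lam-1/2))^2) by ring,
      div_pow, sub_pow, Finset.sum_div, Finset.mul_sum]
    refine Finset.sum_congr rfl (fun i _ => ?_)
    rw [← pow_mul ((j:ℝ)+(lam-1/2)) 2 (m-i)]
    ring
  rw [Finset.sum_congr rfl step1, Finset.sum_comm]
  refine Finset.sum_congr rfl (fun i _ => ?_)
  rw [← Finset.mul_sum, ← Finset.mul_sum]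
  ring

open Finset in
lemma sumL (α : ℝ) (hα : 0 < α) (m : ℕ) :
    ∑ i ∈ Finset.range (m+1), (-1:ℝ)^(i+m) * (m.choose i : ℝ) * ((1:ℝ)/4)^m * (α/(α+((2*(m-i):ℕ):ℝ)))
      = Real.Gamma (α/2+1) * Real.Gamma ((m:ℝ)+1) / (4^m * Real.Gamma (α/2+(m:ℝ)+1)) := by
  rw [← Finset.sum_range_reflect (fun i => (-1:ℝ)^(i+m) * (m.choose i : ℝ) * ((1:ℝ)/4)^m * (α/(α+((2*(m-i):ℕ):ℝ)))) (m+1)]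
  simp only [Nat.add_sub_cancel]
  have hstep : ∀ i ∈ Finset.range (m+1),
      (-1:ℝ)^((m-i)+m) * (m.choose (m-i) : ℝ) * ((1:ℝ)/4)^m * (α/(α+((2*(m-(m-i)):ℕ):ℝ)))
      = ((1:ℝ)/4)^m * (α/2) * ((-1:ℝ)^i * (m.choose i : ℝ) / (α/2 + (i:ℝ))) := by
    intro i hi
    rw [Finset.mem_range] at hi
    have him : i ≤ m := by omega
    rw [show (m-i)+m = i+2*(m-i) by omega, pow_add, pow_mul, neg_one_sq, one_pow, mul_one,
      Nat.choose_symm him, show m-(m-i) = i by omega]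
    have h1 : ((2*i:ℕ):ℝ) = 2*(i:ℝ) := by push_cast; ring
    rw [h1]
    have h2 : α + 2*(i:ℝ) ≠ 0 := by positivity
    have h3 : α/2 + (i:ℝ) ≠ 0 := by positivity
    field_simp
  rw [Finset.sum_congr rfl hstep, ← Finset.mul_sum, keyid m (α/2) (by positivity)]
  rw [Real.Gamma_add_one (by positivity : α/2 ≠ 0)]
  rw [show Real.Gamma ((m:ℝ)+1) = (m.factorial : ℝ) from by exact_mod_cast Real.Gamma_nat_eq_factorial m]
  have h4 : Real.Gamma (α/2+(m:ℝ)+1) ≠ 0 := ne_of_gt (Real.Gamma_pos_of_pos (by positivity))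
  have h5 : ((4:ℝ))^m ≠ 0 := by positivity
  field_simp
  rw [← mul_pow]; norm_num

theorem stmt11 (α : ℝ) (hα : 0 < α) (lam : ℝ) (hlam : -(1/2) < lam)
    (m : ℕ) (hm : 1 ≤ m) :
    Filter.Tendsto (fun n : ℕ => ∑ k ∈ Finset.range (n+1),
      (α * Real.Gamma ((n:ℝ)-(k:ℝ)+α) * Real.Gamma ((n:ℝ)+1) /
        (Real.Gamma ((n:ℝ)-(k:ℝ)+1) * Real.Gamma ((n:ℝ)+α+1))) *
      (((k:ℝ) * (2*(n:ℝ) - (k:ℝ) + 2*lam - 1)) / (4*((n:ℝ)+lam-1)*((n:ℝ)+lam)))^m)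
      Filter.atTop
      (nhds (Real.Gamma (α/2+1) * Real.Gamma ((m:ℝ)+1) / (4^m * Real.Gamma (α/2+(m:ℝ)+1)))) := by
  have hG : ∀ i ∈ Finset.range (m+1), Filter.Tendsto (fun n : ℕ =>
      (-1:ℝ)^(i+m) * (m.choose i : ℝ) *
      ((((n:ℝ)+lam-1/2)^2)^i *
        ((α * Real.Gamma ((n:ℝ)+1)/Real.Gamma ((n:ℝ)+α+1)) *
          ∑ j ∈ Finset.range (n+1), Real.Gamma ((j:ℝ)+α)/Real.Gamma ((j:ℝ)+1) * ((j:ℝ)+(lam-1/2))^(2*(m-i)))) /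
      (4*((n:ℝ)+lam-1)*((n:ℝ)+lam))^m)
      Filter.atTop
      (nhds ((-1:ℝ)^(i+m) * (m.choose i : ℝ) * ((1:ℝ)/4)^m * (α/(α+((2*(m-i):ℕ):ℝ))))) := by
    intro i hi
    rw [Finset.mem_range] at hi
    exact tendsto_G α hα lam hlam m i (by omega)
  have hsum := tendsto_finset_sum (Finset.range (m+1)) hG
  rw [sumL α hα m] at hsum
  exact hsum.congr (fun n => (claim1 α lam m n).symm)
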